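/- Let L : ℝⁿ × ℝⁿ × ℝ → ℝ be C², let σ_L(x)(a, c, e) = e − (∂L/∂v)(x)·a be the contact Lagrangian form, and let dσ_L be its exterior derivative dσ_L(x)(u, u') = (Dσ_L(x)u)(u') − (Dσ_L(x)u')(u). Suppose the Hessian W(x) = (∂²L/∂vⁱ∂vʲ)(x) is invertible at a point x, and set b(x) = (∂²L/∂z∂vⁱ)(x) ∈ ℝⁿ. Then the vector R_L(x) = (0, −W(x)⁻¹ b(x), 1) ∈ ℝⁿ × ℝⁿ × ℝ is the unique tangent vector satisfying dσ_L(x)(R_L(x), u) = 0 for all tangent vectors u and σ_L(x)(R_L(x)) = 1. (Coordinate formula for the Reeb vector field R_L = ∂/∂z − W^{ji}(∂²L/∂z∂vʲ) ∂/∂vⁱ of a regular contact Lagrangian system.) -/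

import Mathlib

open scoped BigOperators
open Matrix

noncomputable section

/-- Points of `TQ × ℝ = ℝⁿ × ℝⁿ × ℝ`, coordinates `(q, v, z)`. -/
abbrev LPt (n : ℕ) := (Fin n → ℝ) × (Fin n → ℝ) × ℝ

/-- The fibre derivative `∂L/∂vⁱ` at `x`. -/
def pderivV {n : ℕ} (L : LPt n → ℝ) (x : LPt n) (i : Fin n) : ℝ :=
  fderiv ℝ L x ((0 : Fin n → ℝ), Pi.single i (1 : ℝ), (0 : ℝ))

/-- The Hessian matrix `W_{ij} = ∂²L/∂vⁱ∂vʲ` at `x`. -/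
def hessianV {n : ℕ} (L : LPt n → ℝ) (x : LPt n) : Matrix (Fin n) (Fin n) ℝ :=
  Matrix.of fun i j =>
    fderiv ℝ (fun y => pderivV L y j) x ((0 : Fin n → ℝ), Pi.single i (1 : ℝ), (0 : ℝ))

/-- The mixed second partial derivatives `b(x)ᵢ = ∂²L/∂z∂vⁱ` at `x`. -/
def mixedZV {n : ℕ} (L : LPt n → ℝ) (x : LPt n) (i : Fin n) : ℝ :=
  fderiv ℝ (fun y => pderivV L y i) x ((0 : Fin n → ℝ), (0 : Fin n → ℝ), (1 : ℝ))

/-- The contact Lagrangian form `σ_L(x)(a, c, e) = e − (∂L/∂v)(x)·a`. -/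
def sigmaL {n : ℕ} (L : LPt n → ℝ) (x u : LPt n) : ℝ :=
  u.2.2 - ∑ i, pderivV L x i * u.1 i

/-- The exterior derivative `dσ_L(x)(u, u') = (Dσ_L(x)u)(u') − (Dσ_L(x)u')(u)`. -/
def dsigmaL {n : ℕ} (L : LPt n → ℝ) (x u u' : LPt n) : ℝ :=
  fderiv ℝ (fun y => sigmaL L y u') x u - fderiv ℝ (fun y => sigmaL L y u) x u'

/-- The coordinate Reeb vector `R_L(x) = (0, −W(x)⁻¹ b(x), 1)`, with components
`R_Lⁱ = −W^{ji}(∂²L/∂z∂vʲ)` in the velocity slot. -/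
def reebL {n : ℕ} (L : LPt n → ℝ) (x : LPt n) : LPt n :=
  ((0 : Fin n → ℝ), fun i => -∑ j, (hessianV L x)⁻¹ j i * mixedZV L x j, (1 : ℝ))

/-- The basis vector in the `v` slot. -/
def eV {n : ℕ} (i : Fin n) : LPt n := ((0 : Fin n → ℝ), Pi.single i (1 : ℝ), (0 : ℝ))

/-- The basis vector in the `q` slot. -/
def eQ {n : ℕ} (i : Fin n) : LPt n := (Pi.single i (1 : ℝ), (0 : Fin n → ℝ), (0 : ℝ))

/-- The basis vector in the `z` slot. -/
def eZ {n : ℕ} : LPt n := ((0 : Fin n → ℝ), (0 : Fin n → ℝ), (1 : ℝ))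

/-- Coordinate formula for the Reeb vector field
`R_L = ∂/∂z − W^{ji}(∂²L/∂z∂vʲ) ∂/∂vⁱ` of a regular contact Lagrangian system:
if the Hessian is invertible at `x`, then `R_L(x)` is the unique tangent vector with
`dσ_L(x)(R_L(x), u) = 0` for all `u` and `σ_L(x)(R_L(x)) = 1`. -/
theorem reeb_vector_field_lagrangian (n : ℕ) (L : LPt n → ℝ)
    (hL : ContDiff ℝ 2 L) (x : LPt n) (hW : IsUnit (hessianV L x)) :
    ((∀ u : LPt n, dsigmaL L x (reebL L x) u = 0) ∧ sigmaL L x (reebL L x) = 1) ∧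
    (∀ Y : LPt n, ((∀ u : LPt n, dsigmaL L x Y u = 0) ∧ sigmaL L x Y = 1) →
      Y = reebL L x) := by
  classical
  set H := fderiv ℝ (fderiv ℝ L) x with hHdef
  have hLd : Differentiable ℝ L := hL.differentiable (by norm_num)
  have hL1 : Differentiable ℝ (fderiv ℝ L) :=
    (hL.fderiv_right (m := 1) (by norm_num)).differentiable (by norm_num)
  have hH : HasFDerivAt (fderiv ℝ L) H x := (hL1 x).hasFDerivAt
  have hsym : ∀ v w : LPt n, H v w = H w v :=
    second_derivative_symmetric (fun y => (hLd y).hasFDerivAt) hH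
  -- derivative of the fibre derivative
  have hPd : ∀ c : LPt n, HasFDerivAt (fun y => fderiv ℝ L y c) (H.flip c) x := by
    intro c
    have h := hH.clm_apply (hasFDerivAt_const c x)
    simpa using h
  -- derivative of `sigmaL`
  have hsd : ∀ u : LPt n, HasFDerivAt (fun y => sigmaL L y u)
      ((0 : LPt n →L[ℝ] ℝ) - ∑ i, u.1 i • H.flip (eV i)) x := by
    intro u
    refine (hasFDerivAt_const u.2.2 x).sub (HasFDerivAt.fun_sum fun i _ => ?_)
    have h := (hPd (eV i)).mul_const (u.1 i)
    exact h
  have key : ∀ u w : LPt n, fderiv ℝ (fun y => sigmaL L y u) x w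
      = -∑ i, H w (eV i) * u.1 i := by
    intro u w
    rw [(hsd u).fderiv]
    rw [ContinuousLinearMap.sub_apply, ContinuousLinearMap.zero_apply, zero_sub, neg_inj,
      ContinuousLinearMap.sum_apply]
    exact Finset.sum_congr rfl fun i _ => by
      rw [ContinuousLinearMap.smul_apply, ContinuousLinearMap.flip_apply, smul_eq_mul,
        mul_comm]
  have dSig : ∀ u u' : LPt n, dsigmaL L x u u'
      = ∑ i, H u' (eV i) * u.1 i - ∑ i, H u (eV i) * u'.1 i := by
    intro u u'
    unfold dsigmaL
    rw [key u' u, key u u']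
    ring
  -- the Hessian and mixed derivatives through `H`
  have hWe : ∀ i j, hessianV L x i j = H (eV i) (eV j) := by
    intro i j
    have hfd : fderiv ℝ (fun y => pderivV L y j) x = H.flip (eV j) :=
      (hPd (eV j)).fderiv
    show fderiv ℝ (fun y => pderivV L y j) x (eV i) = H (eV i) (eV j)
    rw [hfd]
    rfl
  have hbe : ∀ i, mixedZV L x i = H eZ (eV i) := by
    intro i
    have hfd : fderiv ℝ (fun y => pderivV L y i) x = H.flip (eV i) :=
      (hPd (eV i)).fderiv
    show fderiv ℝ (fun y => pderivV L y i) x eZ = H eZ (eV i)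
    rw [hfd]
    rfl
  -- decomposition of vectors of the form (0, r, 1)
  have hdec : ∀ r : Fin n → ℝ,
      (((0 : Fin n → ℝ), r, (1 : ℝ)) : LPt n) = (∑ j, r j • eV j) + eZ := by
    intro r
    refine Prod.ext ?_ (Prod.ext ?_ ?_)
    · simp [eV, eZ, Prod.fst_sum]
    · simp only [Prod.snd_sum, Prod.fst_sum, Prod.smul_fst, Prod.smul_snd, eV, eZ,
        Prod.fst_add, Prod.snd_add]
      funext k
      simp [Finset.sum_apply, Pi.single_apply]
    · simp [eV, eZ, Prod.snd_sum]
  have hlin : ∀ (r : Fin n → ℝ) (c : LPt n),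
      H (((0 : Fin n → ℝ), r, (1 : ℝ)) : LPt n) c
        = (∑ j, r j * H (eV j) c) + H eZ c := by
    intro r c
    rw [hdec r]
    simp [ContinuousLinearMap.sum_apply, smul_eq_mul]
  -- matrix algebra setup
  have hdet : IsUnit (hessianV L x).det := (Matrix.isUnit_iff_isUnit_det _).mp hW
  have hWinv : (hessianV L x)⁻¹ * hessianV L x = 1 := Matrix.nonsing_inv_mul _ hdet
  have hWinv' : hessianV L x * (hessianV L x)⁻¹ = 1 := Matrix.mul_nonsing_inv _ hdet
  set r₀ : Fin n → ℝ := fun i => -∑ j, (hessianV L x)⁻¹ j i * mixedZV L x j with hr₀def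
  have hr0 : r₀ = -(mixedZV L x ᵥ* (hessianV L x)⁻¹) := by
    funext i
    simp only [hr₀def, Matrix.vecMul, dotProduct, Pi.neg_apply, neg_inj]
    exact Finset.sum_congr rfl fun j _ => mul_comm _ _
  -- key property of the Reeb vector
  have hRe : ∀ i, H (reebL L x) (eV i) = 0 := by
    intro i
    have h1 : H (reebL L x) (eV i)
        = (∑ j, r₀ j * H (eV j) (eV i)) + H eZ (eV i) := hlin r₀ (eV i)
    have h2 : ∑ j, r₀ j * H (eV j) (eV i) = (r₀ ᵥ* hessianV L x) i := by
      simp only [Matrix.vecMul, dotProduct]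
      exact Finset.sum_congr rfl fun j _ => by rw [hWe]
    have h3 : r₀ ᵥ* hessianV L x = -(mixedZV L x) := by
      rw [hr0, Matrix.neg_vecMul, Matrix.vecMul_vecMul, hWinv, Matrix.vecMul_one]
    rw [h1, h2, h3, ← hbe]
    simp
  constructor
  · constructor
    · intro u
      rw [dSig]
      have h0 : ∀ i, (reebL L x).1 i = 0 := fun i => rfl
      simp [h0, hRe]
    · have h0 : ∀ i, (reebL L x).1 i = 0 := fun i => rfl
      simp [sigmaL, h0, reebL]
  · rintro Y ⟨hY1, hY2⟩
    -- first component vanishes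
    have hq : Y.1 = 0 := by
      have hv : ∀ j, (hessianV L x *ᵥ Y.1) j = 0 := by
        intro j
        have h := hY1 (eV j)
        rw [dSig] at h
        have e1 : (eV j).1 = (0 : Fin n → ℝ) := rfl
        rw [e1] at h
        simp only [Pi.zero_apply, mul_zero, Finset.sum_const_zero, sub_zero] at h
        have h2 : (hessianV L x *ᵥ Y.1) j = ∑ i, H (eV j) (eV i) * Y.1 i := by
          simp only [Matrix.mulVec, dotProduct]
          exact Finset.sum_congr rfl fun i _ => by rw [hWe]
        rw [h2, h]
      have hv0 : hessianV L x *ᵥ Y.1 = 0 := funext hv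
      calc Y.1 = (1 : Matrix (Fin n) (Fin n) ℝ) *ᵥ Y.1 := (Matrix.one_mulVec _).symm
        _ = ((hessianV L x)⁻¹ * hessianV L x) *ᵥ Y.1 := by rw [hWinv]
        _ = (hessianV L x)⁻¹ *ᵥ (hessianV L x *ᵥ Y.1) := (Matrix.mulVec_mulVec _ _ _).symm
        _ = 0 := by rw [hv0, Matrix.mulVec_zero]
    -- last component is 1
    have hz : Y.2.2 = 1 := by
      have h := hY2
      simp only [sigmaL, hq, Pi.zero_apply, mul_zero, Finset.sum_const_zero, sub_zero] at h
      exact h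
    -- H Y (eV j) = 0
    have hYv : ∀ j, H Y (eV j) = 0 := by
      intro j
      have h := hY1 (eQ j)
      rw [dSig] at h
      rw [hq] at h
      simp only [Pi.zero_apply, mul_zero, Finset.sum_const_zero, zero_sub, neg_eq_zero] at h
      have hs : ∑ i, H Y (eV i) * (eQ j).1 i = H Y (eV j) := by
        have he : ∀ i, (eQ j).1 i = if i = j then 1 else 0 := fun i => by
          simp [eQ, Pi.single_apply]
        simp [he, mul_ite, Finset.sum_ite_eq']
      rw [hs] at h
      exact h
    have hYeq : Y = (((0 : Fin n → ℝ), Y.2.1, (1 : ℝ)) : LPt n) := by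
      rw [← hq, ← hz]
    have hvec : ∀ j, (∑ k, Y.2.1 k * H (eV k) (eV j)) + H eZ (eV j) = 0 := by
      intro j
      rw [← hlin Y.2.1 (eV j), ← hYeq]
      exact hYv j
    have hsolve : Y.2.1 ᵥ* hessianV L x = -(mixedZV L x) := by
      funext j
      have h1 : (Y.2.1 ᵥ* hessianV L x) j = ∑ k, Y.2.1 k * H (eV k) (eV j) := by
        simp only [Matrix.vecMul, dotProduct]
        exact Finset.sum_congr rfl fun k _ => by rw [hWe]
      have h2 := hvec j
      rw [h1, ← hbe] at *
      have : (∑ k, Y.2.1 k * H (eV k) (eV j)) = -(mixedZV L x j) := by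
        have := hvec j
        rw [← hbe] at this
        linarith
      rw [h1, this]
      rfl
    have hY21 : Y.2.1 = r₀ := by
      have h2 : Y.2.1 = -(mixedZV L x) ᵥ* (hessianV L x)⁻¹ := by
        calc Y.2.1 = (Y.2.1 ᵥ* hessianV L x) ᵥ* (hessianV L x)⁻¹ := by
              rw [Matrix.vecMul_vecMul, hWinv', Matrix.vecMul_one]
          _ = -(mixedZV L x) ᵥ* (hessianV L x)⁻¹ := by rw [hsolve]
      rw [h2, hr0, Matrix.neg_vecMul]
    rw [hYeq, hY21]
    rfl

end
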